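/- If additionally Y(a,z) = Y(z) for all a (no direct effect of exposure on outcome not through the mediator), then E[Y(A, Z(a*))] = E[Y(a*)], so the population intervention indirect effect PIIE(a*) = E[Y] − E[Y(A,Z(a*))] equals the population intervention effect PIE(a*) = E[Y] − E[Y(a*)], and E[Y(a*)] is given by Pearl's front-door formula Σ_{z,c} Pr(Z=z|A=a*,C=c) Σ_a E[Y|A=a,Z=z,C=c] Pr(A=a|C=c) Pr(C=c). -/

import Mathlib

open Finset
open scoped Classical BigOperators

noncomputable section

namespace FrontDoor

/-- Probability of an event under pmf `p` on a finite sample space. -/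
def pr {Ω : Type*} [Fintype Ω] (p : Ω → ℝ) (E : Ω → Prop) : ℝ :=
  ∑ ω, if E ω then p ω else 0

/-- Expectation of `X` under pmf `p`. -/
def ex {Ω : Type*} [Fintype Ω] (p : Ω → ℝ) (X : Ω → ℝ) : ℝ :=
  ∑ ω, p ω * X ω

/-- Conditional expectation `E[X | E]`. -/
def cex {Ω : Type*} [Fintype Ω] (p : Ω → ℝ) (X : Ω → ℝ) (E : Ω → Prop) : ℝ :=
  (∑ ω, if E ω then p ω * X ω else 0) / pr p E

/-- Conditional probability `Pr(E | F)`. -/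
def cpr {Ω : Type*} [Fintype Ω] (p : Ω → ℝ) (E F : Ω → Prop) : ℝ :=
  pr p (fun ω => E ω ∧ F ω) / pr p F

end FrontDoor

open FrontDoor

namespace FrontDoorAux

/-- Unnormalized conditional expectation (mass). -/
def mex {Ω : Type*} [Fintype Ω] (p : Ω → ℝ) (E : Ω → Prop) (X : Ω → ℝ) : ℝ :=
  ∑ ω, if E ω then p ω * X ω else 0

variable {Ω : Type*} [Fintype Ω] {p : Ω → ℝ} {E F : Ω → Prop} {X X' : Ω → ℝ}

lemma cex_eq (p : Ω → ℝ) (X : Ω → ℝ) (E : Ω → Prop) :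
    cex p X E = mex p E X / pr p E := rfl

lemma pr_congr (h : ∀ ω, p ω ≠ 0 → (E ω ↔ F ω)) : pr p E = pr p F := by
  unfold pr
  refine Finset.sum_congr rfl fun ω _ => ?_
  by_cases hp : p ω = 0
  · simp [hp]
  · simp [h ω hp]

lemma mex_congr (h : ∀ ω, p ω ≠ 0 → (E ω ↔ F ω))
    (h2 : ∀ ω, p ω ≠ 0 → E ω → X ω = X' ω) : mex p E X = mex p F X' := by
  unfold mex
  refine Finset.sum_congr rfl fun ω _ => ?_
  by_cases hp : p ω = 0
  · simp [hp]
  · by_cases hE : E ω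
    · rw [if_pos hE, if_pos ((h ω hp).1 hE), h2 ω hp hE]
    · rw [if_neg hE, if_neg (fun hF => hE ((h ω hp).2 hF))]

lemma pr_mono (hp0 : ∀ ω, 0 ≤ p ω) (h : ∀ ω, E ω → F ω) : pr p E ≤ pr p F := by
  unfold pr
  refine Finset.sum_le_sum fun ω _ => ?_
  by_cases hE : E ω
  · rw [if_pos hE, if_pos (h ω hE)]
  · rw [if_neg hE]; split <;> simp [hp0 _]

lemma mex_eq_sum_values (p : Ω → ℝ) (E : Ω → Prop) (X : Ω → ℝ) :
    mex p E X = ∑ y ∈ Finset.image X Finset.univ,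
      y * pr p (fun ω => X ω = y ∧ E ω) := by
  unfold mex pr
  simp_rw [Finset.mul_sum, mul_ite, mul_zero]
  rw [Finset.sum_comm]
  refine Finset.sum_congr rfl fun ω _ => ?_
  by_cases hE : E ω
  · simp only [hE, and_true]
    have : ∀ y ∈ Finset.image X Finset.univ,
        (if X ω = y then y * p ω else 0) = if y = X ω then X ω * p ω else 0 := by
      intro y _
      by_cases h : X ω = y
      · simp [h]
      · simp [h, Ne.symm h]
    rw [Finset.sum_congr rfl this, Finset.sum_ite_eq']
    simp [hE, mul_comm]
  · simp [hE]

lemma mex_indep (hF : pr p F ≠ 0)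
    (h : ∀ y : ℝ, pr p (fun ω => (X ω = y ∧ E ω) ∧ F ω) * pr p F
      = pr p (fun ω => X ω = y ∧ F ω) * pr p (fun ω => E ω ∧ F ω)) :
    mex p (fun ω => E ω ∧ F ω) X * pr p F
      = mex p F X * pr p (fun ω => E ω ∧ F ω) := by
  rw [mex_eq_sum_values p (fun ω => E ω ∧ F ω) X, mex_eq_sum_values p F X,
    Finset.sum_mul, Finset.sum_mul]
  refine Finset.sum_congr rfl fun y _ => ?_
  have hassoc : pr p (fun ω => X ω = y ∧ E ω ∧ F ω)
      = pr p (fun ω => (X ω = y ∧ E ω) ∧ F ω) := pr_congr (by tauto)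
  rw [mul_assoc, hassoc, h y, mul_assoc]

lemma sum_rotate {β1 β2 β3 β4 : Type*} [Fintype β1] [Fintype β2] [Fintype β3]
    [Fintype β4] (f : β1 → β2 → β3 → β4 → ℝ) :
    ∑ a, ∑ b, ∑ c, ∑ d, f a b c d = ∑ d, ∑ a, ∑ b, ∑ c, f a b c d :=
  calc ∑ a, ∑ b, ∑ c, ∑ d, f a b c d
      = ∑ a, ∑ b, ∑ d, ∑ c, f a b c d :=
        Finset.sum_congr rfl fun _ _ => Finset.sum_congr rfl fun _ _ =>
          Finset.sum_comm
    _ = ∑ a, ∑ d, ∑ b, ∑ c, f a b c d :=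
        Finset.sum_congr rfl fun _ _ => Finset.sum_comm
    _ = ∑ d, ∑ a, ∑ b, ∑ c, f a b c d := Finset.sum_comm

end FrontDoorAux

open FrontDoorAux

/-- Under M1-M3, positivity, and full mediation F1
(`Y(a,z) = Y(a',z)` for all `a, a', z`), we have `E[Y(A,Z(a*))] = E[Y(a*)]`,
`E[Y(a*)]` is given by Pearl's front-door formula, and hence
`PIIE(a*) = E[Y] - E[Y(A,Z(a*))]` equals `PIE(a*) = E[Y] - E[Y(a*)]`. -/
theorem piie_equals_pie_under_frontdoor
    {Ω α ζ γ : Type*} [Fintype Ω] [Fintype α] [Fintype ζ] [Fintype γ]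
    (p : Ω → ℝ) (hp0 : ∀ ω, 0 ≤ p ω) (hp1 : ∑ ω, p ω = 1)
    (A : Ω → α) (Z : Ω → ζ) (Y : Ω → ℝ) (C : Ω → γ)
    (Zc : α → Ω → ζ) (Yc : α → ζ → Ω → ℝ) (astar : α)
    -- M1: consistency (almost surely)
    (hconsZ : ∀ ω, p ω ≠ 0 → Zc (A ω) ω = Z ω)
    (hconsY : ∀ ω, p ω ≠ 0 → Yc (A ω) (Z ω) ω = Y ω)
    -- M2: Z(a') ⊥ A | C
    (hM2 : ∀ (a' : α) (z : ζ) (a : α) (c : γ),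
      cpr p (fun ω => Zc a' ω = z ∧ A ω = a) (fun ω => C ω = c)
        = cpr p (fun ω => Zc a' ω = z) (fun ω => C ω = c)
          * cpr p (fun ω => A ω = a) (fun ω => C ω = c))
    -- M3: Y(a,z) ⊥ Z(a') | A = a, C = c
    (hM3 : ∀ (a a' : α) (z z' : ζ) (c : γ) (y : ℝ),
      cpr p (fun ω => Yc a z ω = y ∧ Zc a' ω = z') (fun ω => A ω = a ∧ C ω = c)
        = cpr p (fun ω => Yc a z ω = y) (fun ω => A ω = a ∧ C ω = c)
          * cpr p (fun ω => Zc a' ω = z') (fun ω => A ω = a ∧ C ω = c))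
    -- positivity (P1 and P2)
    (hposAC : ∀ (a : α) (c : γ), 0 < pr p (fun ω => A ω = a ∧ C ω = c))
    (hposZAC : ∀ (a : α) (z : ζ) (c : γ),
      0 < pr p (fun ω => A ω = a ∧ Z ω = z ∧ C ω = c))
    -- F1: full mediation, no direct effect of A on Y
    (hF1 : ∀ (a a' : α) (z : ζ) (ω : Ω), Yc a z ω = Yc a' z ω) :
    ex p (fun ω => Yc (A ω) (Zc astar ω) ω)
        = ex p (fun ω => Yc astar (Zc astar ω) ω)
      ∧ ex p (fun ω => Yc astar (Zc astar ω) ω)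
          = ∑ z : ζ, ∑ c : γ,
              cpr p (fun ω => Z ω = z) (fun ω => A ω = astar ∧ C ω = c)
                * ∑ a : α,
                    cex p Y (fun ω => A ω = a ∧ Z ω = z ∧ C ω = c)
                      * cpr p (fun ω => A ω = a) (fun ω => C ω = c)
                      * pr p (fun ω => C ω = c)
      ∧ ex p Y - ex p (fun ω => Yc (A ω) (Zc astar ω) ω)
          = ex p Y - ex p (fun ω => Yc astar (Zc astar ω) ω) := by
  -- conjunct 1
  have h1 : ex p (fun ω => Yc (A ω) (Zc astar ω) ω)
      = ex p (fun ω => Yc astar (Zc astar ω) ω) := by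
    unfold FrontDoor.ex
    refine Finset.sum_congr rfl fun ω _ => ?_
    show p ω * Yc (A ω) (Zc astar ω) ω = p ω * Yc astar (Zc astar ω) ω
    rw [hF1 (A ω) astar]
  -- positivity consequences
  have hPC : ∀ c : γ, 0 < pr p (fun ω => C ω = c) := fun c =>
    lt_of_lt_of_le (hposAC astar c) (pr_mono hp0 (fun ω h => h.2))
  have hPCne : ∀ c : γ, pr p (fun ω => C ω = c) ≠ 0 := fun c => ne_of_gt (hPC c)
  have hPACne : ∀ a c, pr p (fun ω => A ω = a ∧ C ω = c) ≠ 0 :=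
    fun a c => ne_of_gt (hposAC a c)
  have hPZACne : ∀ a z c, pr p (fun ω => A ω = a ∧ Z ω = z ∧ C ω = c) ≠ 0 :=
    fun a z c => ne_of_gt (hposZAC a z c)
  -- mass form of M2
  have hM2m : ∀ (a' : α) (z : ζ) (a : α) (c : γ),
      pr p (fun ω => (Zc a' ω = z ∧ A ω = a) ∧ C ω = c) * pr p (fun ω => C ω = c)
        = pr p (fun ω => Zc a' ω = z ∧ C ω = c)
          * pr p (fun ω => A ω = a ∧ C ω = c) := by
    intro a' z a c
    have h := hM2 a' z a c
    simp only [cpr] at h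
    field_simp [hPCne c] at h
    exact h
  -- mass form of M3
  have hM3m : ∀ (a a' : α) (z z' : ζ) (c : γ) (y : ℝ),
      pr p (fun ω => (Yc a z ω = y ∧ Zc a' ω = z') ∧ (A ω = a ∧ C ω = c))
          * pr p (fun ω => A ω = a ∧ C ω = c)
        = pr p (fun ω => Yc a z ω = y ∧ (A ω = a ∧ C ω = c))
          * pr p (fun ω => Zc a' ω = z' ∧ (A ω = a ∧ C ω = c)) := by
    intro a a' z z' c y
    have h := hM3 a a' z z' c y
    simp only [cpr] at h
    field_simp [hPACne a c] at h
    exact h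
  -- decomposition of the counterfactual mean
  have hdecomp : ex p (fun ω => Yc astar (Zc astar ω) ω)
      = ∑ z : ζ, ∑ c : γ, ∑ a : α,
          mex p (fun ω => Zc astar ω = z ∧ A ω = a ∧ C ω = c) (Yc a z) := by
    have hω : ∀ ω : Ω,
        (∑ z : ζ, ∑ c : γ, ∑ a : α,
          if Zc astar ω = z ∧ A ω = a ∧ C ω = c then p ω * Yc a z ω else 0)
          = p ω * Yc astar (Zc astar ω) ω := by
      intro ω
      simp [ite_and, Finset.sum_ite_eq, Finset.sum_ite_eq', hF1 (A ω) astar]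
    have hrot := sum_rotate (fun (z : ζ) (c : γ) (a : α) (ω : Ω) =>
      if Zc astar ω = z ∧ A ω = a ∧ C ω = c then p ω * Yc a z ω else 0)
    simp only [FrontDoorAux.mex]
    refine (Finset.sum_congr rfl fun ω _ => (hω ω).symm).trans ?_
    convert hrot.symm using 9
  -- per-term identity
  have hterm : ∀ (z : ζ) (c : γ) (a : α),
      mex p (fun ω => Zc astar ω = z ∧ A ω = a ∧ C ω = c) (Yc a z)
        = cpr p (fun ω => Z ω = z) (fun ω => A ω = astar ∧ C ω = c)
            * (cex p Y (fun ω => A ω = a ∧ Z ω = z ∧ C ω = c)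
                * cpr p (fun ω => A ω = a) (fun ω => C ω = c)
                * pr p (fun ω => C ω = c)) := by
    intro z c a
    -- independence step 1 (M3 with a' = astar)
    have e1 : mex p (fun ω => Zc astar ω = z ∧ A ω = a ∧ C ω = c) (Yc a z)
          * pr p (fun ω => A ω = a ∧ C ω = c)
        = mex p (fun ω => A ω = a ∧ C ω = c) (Yc a z)
          * pr p (fun ω => Zc astar ω = z ∧ A ω = a ∧ C ω = c) :=
      mex_indep (hPACne a c) (fun y => hM3m a astar z z c y)
    -- independence step 2 (M3 with a' = a) plus consistency
    have e2' : mex p (fun ω => Zc a ω = z ∧ A ω = a ∧ C ω = c) (Yc a z)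
          * pr p (fun ω => A ω = a ∧ C ω = c)
        = mex p (fun ω => A ω = a ∧ C ω = c) (Yc a z)
          * pr p (fun ω => Zc a ω = z ∧ A ω = a ∧ C ω = c) :=
      mex_indep (hPACne a c) (fun y => hM3m a a z z c y)
    have hiff : ∀ ω, p ω ≠ 0 →
        ((Zc a ω = z ∧ A ω = a ∧ C ω = c) ↔ (A ω = a ∧ Z ω = z ∧ C ω = c)) := by
      intro ω hp
      constructor
      · rintro ⟨hz, ha, hc⟩
        refine ⟨ha, ?_, hc⟩
        rw [← hconsZ ω hp, ha, hz]
      · rintro ⟨ha, hz, hc⟩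
        refine ⟨?_, ha, hc⟩
        rw [← ha, hconsZ ω hp, hz]
    have hval : ∀ ω, p ω ≠ 0 → (Zc a ω = z ∧ A ω = a ∧ C ω = c) →
        Yc a z ω = Y ω := by
      rintro ω hp ⟨hz, ha, hc⟩
      have hZ : Z ω = z := by rw [← hconsZ ω hp, ha, hz]
      rw [← ha, ← hZ]
      exact hconsY ω hp
    have eA : mex p (fun ω => Zc a ω = z ∧ A ω = a ∧ C ω = c) (Yc a z)
        = mex p (fun ω => A ω = a ∧ Z ω = z ∧ C ω = c) Y := mex_congr hiff hval
    have eB : pr p (fun ω => Zc a ω = z ∧ A ω = a ∧ C ω = c)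
        = pr p (fun ω => A ω = a ∧ Z ω = z ∧ C ω = c) := pr_congr hiff
    rw [eA, eB] at e2'
    -- M2 mass form, reassociated
    have e3 : pr p (fun ω => Zc astar ω = z ∧ A ω = a ∧ C ω = c)
          * pr p (fun ω => C ω = c)
        = pr p (fun ω => Zc astar ω = z ∧ C ω = c)
          * pr p (fun ω => A ω = a ∧ C ω = c) := by
      have := hM2m astar z a c
      rwa [show pr p (fun ω => (Zc astar ω = z ∧ A ω = a) ∧ C ω = c)
          = pr p (fun ω => Zc astar ω = z ∧ A ω = a ∧ C ω = c) from
        pr_congr (by tauto)] at this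
    have e4 : pr p (fun ω => A ω = astar ∧ Z ω = z ∧ C ω = c)
          * pr p (fun ω => C ω = c)
        = pr p (fun ω => Zc astar ω = z ∧ C ω = c)
          * pr p (fun ω => A ω = astar ∧ C ω = c) := by
      have := hM2m astar z astar c
      rwa [show pr p (fun ω => (Zc astar ω = z ∧ A ω = astar) ∧ C ω = c)
          = pr p (fun ω => A ω = astar ∧ Z ω = z ∧ C ω = c) from
        pr_congr ?_] at this
      intro ω hp
      constructor
      · rintro ⟨⟨hz, ha⟩, hc⟩
        exact ⟨ha, by rw [← hconsZ ω hp, ha, hz], hc⟩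
      · rintro ⟨ha, hz, hc⟩
        exact ⟨⟨by rw [← ha, hconsZ ω hp, hz], ha⟩, hc⟩
    -- assemble via algebra
    have hnum : pr p (fun ω => Z ω = z ∧ (A ω = astar ∧ C ω = c))
        = pr p (fun ω => A ω = astar ∧ Z ω = z ∧ C ω = c) := pr_congr (by tauto)
    rw [cpr, cpr, cex_eq, hnum]
    have eT : mex p (fun ω => Zc astar ω = z ∧ A ω = a ∧ C ω = c) (Yc a z)
        = mex p (fun ω => A ω = a ∧ C ω = c) (Yc a z)
          * pr p (fun ω => Zc astar ω = z ∧ A ω = a ∧ C ω = c)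
          / pr p (fun ω => A ω = a ∧ C ω = c) :=
      (eq_div_iff (hPACne a c)).mpr e1
    have eQa : pr p (fun ω => Zc astar ω = z ∧ A ω = a ∧ C ω = c)
        = pr p (fun ω => Zc astar ω = z ∧ C ω = c)
          * pr p (fun ω => A ω = a ∧ C ω = c) / pr p (fun ω => C ω = c) :=
      (eq_div_iff (hPCne c)).mpr e3
    have eMY : mex p (fun ω => A ω = a ∧ C ω = c) (Yc a z)
        = mex p (fun ω => A ω = a ∧ Z ω = z ∧ C ω = c) Y
          * pr p (fun ω => A ω = a ∧ C ω = c)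
          / pr p (fun ω => A ω = a ∧ Z ω = z ∧ C ω = c) :=
      (eq_div_iff (hPZACne a z c)).mpr e2'.symm
    have eQ : pr p (fun ω => Zc astar ω = z ∧ C ω = c)
        = pr p (fun ω => A ω = astar ∧ Z ω = z ∧ C ω = c)
          * pr p (fun ω => C ω = c) / pr p (fun ω => A ω = astar ∧ C ω = c) :=
      (eq_div_iff (hPACne astar c)).mpr e4.symm
    rw [eT, eQa, eMY, eQ]
    field_simp [hPACne a c, hPCne c, hPZACne a z c, hPACne astar c]
  -- finish
  refine ⟨h1, ?_, by rw [h1]⟩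
  rw [hdecomp]
  refine Finset.sum_congr rfl fun z _ => Finset.sum_congr rfl fun c _ => ?_
  rw [Finset.mul_sum]
  exact Finset.sum_congr rfl fun a _ => hterm z c a
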